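/- Let u_l ∈ ℝ and 0 < ρ_r < ρ_l. Suppose for each ε in some interval (0, η) the pair (u*_ε, ρ*_ε) satisfies ρ_r < ρ*_ε < ρ_l and (u*_ε − u_l)²·(ρ*_ε + ρ_r)/2 = ε·(ρ*_ε − ρ_r)·(p(ρ*_ε) − p(ρ_r)). Then u*_ε → u_l as ε → 0⁺. (Consequently, in the case u_l = u_r the Riemann solutions of the perturbed system converge to the contact-type solution u ≡ u_l, ρ = ρ_l for x < u_l t and ρ = ρ_r for x > u_l t.) -/

import Mathlib

open Real Filter Topology

/-- The pressure-like function `p(ρ) = ∫₀^ρ ξ·e^ξ dξ`. -/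
noncomputable def p (ρ : ℝ) : ℝ := ∫ ξ in (0:ℝ)..ρ, ξ * Real.exp ξ

lemma p_mono {a b : ℝ} (ha : 0 ≤ a) (hab : a ≤ b) : p a ≤ p b := by
  have hcont : Continuous fun ξ : ℝ => ξ * Real.exp ξ := by continuity
  have hadd : p a + ∫ ξ in a..b, ξ * Real.exp ξ = p b := by
    exact intervalIntegral.integral_add_adjacent_intervals
      (hcont.intervalIntegrable _ _) (hcont.intervalIntegrable _ _)
  have hnn : 0 ≤ ∫ ξ in a..b, ξ * Real.exp ξ := by
    apply intervalIntegral.integral_nonneg hab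
    intro x hx
    exact mul_nonneg (le_trans ha hx.1) (Real.exp_pos x).le
  linarith

/-- If `ρ_r < ρ*_ε < ρ_l` and `(u*_ε − u_l)²·(ρ*_ε + ρ_r)/2 = ε·(ρ*_ε − ρ_r)·(p(ρ*_ε) −
p(ρ_r))` for all `ε ∈ (0, η)`, then `u*_ε → u_l` as `ε → 0⁺`. -/
theorem stmt17 (ul ρl ρr η : ℝ) (hρr : 0 < ρr) (hlt : ρr < ρl) (hη : 0 < η)
    (us ρs : ℝ → ℝ)
    (hmem : ∀ ε ∈ Set.Ioo (0:ℝ) η, ρr < ρs ε ∧ ρs ε < ρl)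
    (heq : ∀ ε ∈ Set.Ioo (0:ℝ) η,
      (us ε - ul) ^ 2 * (ρs ε + ρr) / 2 = ε * (ρs ε - ρr) * (p (ρs ε) - p ρr)) :
    Tendsto us (𝓝[>] (0:ℝ)) (𝓝 ul) := by
  set K : ℝ := ρl * (p ρl - p ρr) / ρr with hK
  have hpK : 0 ≤ K := by
    have : p ρr ≤ p ρl := p_mono hρr.le hlt.le
    apply div_nonneg (mul_nonneg (by linarith) (by linarith)) hρr.le
  -- key bound
  have key : ∀ ε ∈ Set.Ioo (0:ℝ) η, |us ε - ul| ≤ Real.sqrt (K * ε) := by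
    intro ε hε
    obtain ⟨h1, h2⟩ := hmem ε hε
    have hε0 : 0 < ε := hε.1
    have hps : p (ρs ε) ≤ p ρl := p_mono (by linarith) h2.le
    have hpr : p ρr ≤ p (ρs ε) := p_mono hρr.le h1.le
    have hsum : 2 * ρr ≤ ρs ε + ρr := by linarith
    have hsq : (us ε - ul) ^ 2 ≤ K * ε := by
      have e := heq ε hε
      have h3 : (us ε - ul) ^ 2 * (2 * ρr) / 2 ≤ ε * (ρs ε - ρr) * (p (ρs ε) - p ρr) := by
        rw [← e]
        apply div_le_div_of_nonneg_right _ (by norm_num)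
        exact mul_le_mul_of_nonneg_left hsum (sq_nonneg _)
      have h4 : ε * (ρs ε - ρr) * (p (ρs ε) - p ρr) ≤ ε * ρl * (p ρl - p ρr) := by
        apply mul_le_mul
        · apply mul_le_mul_of_nonneg_left (by linarith) hε0.le
        · linarith
        · linarith
        · exact mul_nonneg hε0.le (by linarith)
      have h5 : (us ε - ul) ^ 2 * ρr ≤ ε * ρl * (p ρl - p ρr) := by
        have : (us ε - ul) ^ 2 * (2 * ρr) / 2 = (us ε - ul) ^ 2 * ρr := by ring
        linarith [h3, h4, this ▸ h3]
      rw [hK]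
      rw [div_mul_eq_mul_div, le_div_iff₀ hρr]
      calc (us ε - ul) ^ 2 * ρr ≤ ε * ρl * (p ρl - p ρr) := h5
        _ = ρl * (p ρl - p ρr) * ε := by ring
    have := Real.sqrt_le_sqrt hsq
    rwa [Real.sqrt_sq_eq_abs] at this
  -- sqrt(K ε) → 0
  have hg : Tendsto (fun ε => Real.sqrt (K * ε)) (𝓝[>] (0:ℝ)) (𝓝 0) := by
    have h1 : Tendsto (fun ε : ℝ => K * ε) (𝓝[>] (0:ℝ)) (𝓝 0) := by
      have h0 : Tendsto (fun ε : ℝ => K * ε) (𝓝 (0:ℝ)) (𝓝 (K * 0)) :=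
        (continuous_const.mul continuous_id).tendsto 0
      have := h0.mono_left (nhdsWithin_le_nhds (s := Set.Ioi (0:ℝ)))
      simpa using this
    have := (Real.continuous_sqrt.tendsto 0).comp h1
    simpa [Function.comp_def] using this
  have hdiff : Tendsto (fun ε => us ε - ul) (𝓝[>] (0:ℝ)) (𝓝 0) := by
    apply squeeze_zero_norm' _ hg
    filter_upwards [Ioo_mem_nhdsGT_of_mem (by constructor <;> simp [hη] : (0:ℝ) ∈ Set.Ico 0 η)]
      with ε hε
    simpa [Real.norm_eq_abs] using key ε hε
  have := hdiff.add (tendsto_const_nhds (x := ul))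
  simpa using this
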